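/- Let x₁ < x₂ < ⋯ < xₙ be real numbers and x = (x₁,…,xₙ) ∈ ℝⁿ. If z ∈ ℝⁿ strictly satisfies all the constraints |zᵀ|x − 1·xᵢ| − 1ᵀsign(x − 1·xᵢ)| < β and |zᵀ|−x + 1·xᵢ| + 1ᵀsign(−x + 1·xᵢ)| < β for all i = 1,…,n, together with zᵀ1 = 0, then β > 1. (Here |v| and sign(v) apply elementwise, sign(t) = 1 for t ≥ 0 and −1 for t < 0, and 1 is the all-ones vector.) -/

import Mathlib

/-- Elementwise sign function with `sgn t = 1` for `t ≥ 0` and `-1` otherwise. -/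
noncomputable def sgn (t : ℝ) : ℝ := if 0 ≤ t then 1 else -1

/-- If `x₁ < ⋯ < xₙ` and `z` strictly satisfies all the constraints
`|zᵀ|x - 1xᵢ| - 1ᵀ sign(x - 1xᵢ)| < β` and
`|zᵀ|-x + 1xᵢ| + 1ᵀ sign(-x + 1xᵢ)| < β` for all `i`, together with
`zᵀ1 = 0`, then `β > 1`. -/
theorem stmt_1 (n : ℕ) (hn : 0 < n) (x z : Fin n → ℝ) (hx : StrictMono x)
    (β : ℝ)
    (hz : ∑ j, z j = 0)
    (h1 : ∀ i : Fin n, |(∑ j, z j * |x j - x i|) - ∑ j, sgn (x j - x i)| < β)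
    (h2 : ∀ i : Fin n, |(∑ j, z j * |-(x j) + x i|) + ∑ j, sgn (-(x j) + x i)| < β) :
    1 < β := by
  set i : Fin n := ⟨0, hn⟩ with hidef
  have hle : ∀ j : Fin n, x i ≤ x j := by
    intro j
    exact hx.monotone (show i ≤ j by simp [Fin.le_def, hidef])
  have habs : ∀ j : Fin n, |-(x j) + x i| = |x j - x i| := by
    intro j; rw [neg_add_eq_sub, abs_sub_comm]
  have hs1 : ∀ j : Fin n, sgn (x j - x i) = 1 := fun j => by
    simp [sgn, sub_nonneg.mpr (hle j)]
  have hsum1 : (∑ j, sgn (x j - x i)) = (n : ℝ) := by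
    simp [hs1]
  have hsum2 : (∑ j, sgn (-(x j) + x i)) = 2 - (n : ℝ) := by
    rw [← Finset.sum_compl_add_sum {i}]
    have hc : ∀ j ∈ ({i} : Finset (Fin n))ᶜ, sgn (-(x j) + x i) = -1 := by
      intro j hj
      have hji : i < j := by
        rcases lt_or_eq_of_le (by simp [Fin.le_def, hidef] : i ≤ j) with h | h
        · exact h
        · simp [← h] at hj
      have : -(x j) + x i < 0 := by linarith [hx hji]
      simp [sgn, not_le.mpr this]
    rw [Finset.sum_congr rfl hc]
    have hcard : (({i} : Finset (Fin n))ᶜ).card = n - 1 := by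
      simp [Finset.card_compl]
    simp [hcard, sgn, Nat.cast_sub hn]
    ring
  have H1 := h1 i
  have H2 := h2 i
  rw [hsum1] at H1
  simp only [habs] at H2
  rw [hsum2] at H2
  rw [abs_lt] at H1 H2
  linarith [H1.1, H1.2, H2.1, H2.2]
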